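/- (Mukkamala–Hein adaptive sum bound) Let g_{t,i} be reals for t = 1,…,T and i = 1,…,d, let δ > 0, let 0 < γ ≤ 1, and let β_t satisfy 1 − 1/t ≤ β_t ≤ 1 − γ/t for all t ≥ 1. Define v_{0,i} = 0 and v_{t,i} = β_t v_{t−1,i} + (1−β_t) g_{t,i}². Then ∑_{i=1}^{d} ∑_{t=1}^{T} g_{t,i}² / (√(t v_{t,i}) + δ) ≤ ∑_{i=1}^{d} (2(2−γ)/γ)(√(T v_{T,i}) + δ). -/

import Mathlib

open Finset

/-- Mukkamala–Hein adaptive sum bound: for the EMA recursion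
`v_{t,i} = β_t v_{t−1,i} + (1−β_t) g_{t,i}²` with `1 − 1/t ≤ β_t ≤ 1 − γ/t`,
`∑_i ∑_{t=1}^T g_{t,i}²/(√(t v_{t,i}) + δ) ≤ ∑_i (2(2−γ)/γ)(√(T v_{T,i}) + δ)`. -/
theorem stmt_8 (d T : ℕ) (g : ℕ → ℕ → ℝ) (δ γ : ℝ) (hδ : 0 < δ)
    (hγ0 : 0 < γ) (hγ1 : γ ≤ 1)
    (β : ℕ → ℝ)
    (hβ : ∀ t : ℕ, 1 ≤ t → 1 - 1 / (t : ℝ) ≤ β t ∧ β t ≤ 1 - γ / (t : ℝ))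
    (v : ℕ → ℕ → ℝ) (hv0 : ∀ i, v 0 i = 0)
    (hv : ∀ t, 1 ≤ t → ∀ i, v t i = β t * v (t - 1) i + (1 - β t) * (g t i) ^ 2) :
    ∑ i ∈ range d, ∑ t ∈ Icc 1 T,
        (g t i) ^ 2 / (Real.sqrt (t * v t i) + δ) ≤
      ∑ i ∈ range d, (2 * (2 - γ) / γ) * (Real.sqrt (T * v T i) + δ) := by
  apply Finset.sum_le_sum
  intro i _
  -- bounds on β for t = n+1
  have hβ' : ∀ n : ℕ, 1 - 1 / ((n : ℝ) + 1) ≤ β (n + 1) ∧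
      β (n + 1) ≤ 1 - γ / ((n : ℝ) + 1) := by
    intro n
    have h := hβ (n + 1) (by omega)
    push_cast at h
    exact h
  have hnpos : ∀ n : ℕ, (0 : ℝ) < (n : ℝ) + 1 := by
    intro n; positivity
  -- v is nonnegative
  have hvnn : ∀ t, 0 ≤ v t i := by
    intro t
    induction t with
    | zero => rw [hv0]
    | succ n ih =>
      have hb := hβ' n
      have hn := hnpos n
      have hb0 : 0 ≤ β (n + 1) := by
        have h1 : 1 / ((n : ℝ) + 1) ≤ 1 := by
          rw [div_le_one hn]; linarith
        linarith [hb.1]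
      have hb1 : 0 ≤ 1 - β (n + 1) := by
        have : 0 ≤ γ / ((n : ℝ) + 1) := by positivity
        linarith [hb.2]
      have := hv (n + 1) (by omega) i
      simp only [Nat.add_sub_cancel] at this
      rw [this]
      positivity
  set a : ℕ → ℝ := fun t => (t : ℝ) * v t i with ha
  have hann : ∀ t, 0 ≤ a t := fun t => mul_nonneg (Nat.cast_nonneg t) (hvnn t)
  -- a is monotone and the key increment bound
  have hkey : ∀ n : ℕ, a n ≤ a (n + 1) ∧ γ * (g (n + 1) i) ^ 2 ≤ a (n + 1) - a n := by
    intro n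
    have hb := hβ' n
    have hn := hnpos n
    have hrec := hv (n + 1) (by omega) i
    simp only [Nat.add_sub_cancel] at hrec
    have han1 : a (n + 1) = ((n : ℝ) + 1) * (β (n + 1) * v n i
        + (1 - β (n + 1)) * (g (n + 1) i) ^ 2) := by
      simp only [ha, hrec]; push_cast; ring
    have h1 : (n : ℝ) ≤ ((n : ℝ) + 1) * β (n + 1) := by
      have := hb.1
      have : ((n : ℝ) + 1) * (1 - 1 / ((n : ℝ) + 1)) ≤ ((n : ℝ) + 1) * β (n + 1) :=
        mul_le_mul_of_nonneg_left this (le_of_lt hn)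
      calc (n : ℝ) = ((n : ℝ) + 1) * (1 - 1 / ((n : ℝ) + 1)) := by
            field_simp
            ring
        _ ≤ _ := this
    have h2 : γ ≤ ((n : ℝ) + 1) * (1 - β (n + 1)) := by
      have := hb.2
      have h' : ((n : ℝ) + 1) * (γ / ((n : ℝ) + 1)) ≤ ((n : ℝ) + 1) * (1 - β (n + 1)) :=
        mul_le_mul_of_nonneg_left (by linarith) (le_of_lt hn)
      rwa [mul_div_cancel₀ _ (ne_of_gt hn)] at h'
    have han : a n = (n : ℝ) * v n i := rfl
    have hvn := hvnn n
    have hg2 : (0 : ℝ) ≤ (g (n + 1) i) ^ 2 := sq_nonneg _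
    constructor
    · rw [han1, han]
      have : (n : ℝ) * v n i ≤ ((n : ℝ) + 1) * β (n + 1) * v n i :=
        mul_le_mul_of_nonneg_right h1 hvn
      have h2' : 0 ≤ ((n : ℝ) + 1) * (1 - β (n + 1)) := le_trans (le_of_lt hγ0) h2
      nlinarith [mul_nonneg h2' hg2]
    · rw [han1, han]
      have h3 : γ * (g (n + 1) i) ^ 2 ≤ ((n : ℝ) + 1) * (1 - β (n + 1)) * (g (n + 1) i) ^ 2 :=
        mul_le_mul_of_nonneg_right h2 hg2
      nlinarith [mul_le_mul_of_nonneg_right h1 hvn]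
  -- per-step bound
  have hstep : ∀ n : ℕ, (g (n + 1) i) ^ 2 / (Real.sqrt (a (n + 1)) + δ) ≤
      (2 / γ) * (Real.sqrt (a (n + 1)) - Real.sqrt (a n)) := by
    intro n
    obtain ⟨hmono, hinc⟩ := hkey n
    set s := Real.sqrt (a (n + 1)) with hs
    set r := Real.sqrt (a n) with hr
    have hs2 : s ^ 2 = a (n + 1) := Real.sq_sqrt (hann _)
    have hr2 : r ^ 2 = a n := Real.sq_sqrt (hann _)
    have hrs : r ≤ s := Real.sqrt_le_sqrt hmono
    have hr0 : 0 ≤ r := Real.sqrt_nonneg _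
    have hsd : 0 < s + δ := by have := Real.sqrt_nonneg (a (n+1)); rw [← hs] at this; linarith
    rw [div_le_iff₀ hsd]
    have hγg : γ * (g (n + 1) i) ^ 2 ≤ s ^ 2 - r ^ 2 := by rw [hs2, hr2]; exact hinc
    have key : γ * (g (n + 1) i) ^ 2 ≤ γ * ((2 / γ) * (s - r) * (s + δ)) := by
      have : γ * ((2 / γ) * (s - r) * (s + δ)) = 2 * (s - r) * (s + δ) := by
        field_simp
      rw [this]
      nlinarith [mul_nonneg (sub_nonneg.2 hrs) hr0, mul_nonneg (sub_nonneg.2 hrs) hδ.le]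
    exact le_of_mul_le_mul_left key hγ0
  -- sum over t
  have hsum : ∑ t ∈ Icc 1 T, (g t i) ^ 2 / (Real.sqrt ((t : ℝ) * v t i) + δ) ≤
      (2 / γ) * Real.sqrt (a T) := by
    rw [← Finset.Ico_add_one_right_eq_Icc, Finset.sum_Ico_eq_sum_range]
    simp only [Nat.add_sub_cancel]
    have : ∀ k ∈ Finset.range T, (g (1 + k) i) ^ 2 / (Real.sqrt (((1 + k : ℕ) : ℝ) * v (1 + k) i) + δ)
        ≤ (2 / γ) * (Real.sqrt (a (k + 1)) - Real.sqrt (a k)) := by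
      intro k _
      have := hstep k
      rw [add_comm 1 k]
      exact this
    calc ∑ k ∈ Finset.range T, (g (1 + k) i) ^ 2 / (Real.sqrt (((1 + k : ℕ) : ℝ) * v (1 + k) i) + δ)
        ≤ ∑ k ∈ Finset.range T, (2 / γ) * (Real.sqrt (a (k + 1)) - Real.sqrt (a k)) :=
          Finset.sum_le_sum this
      _ = (2 / γ) * ∑ k ∈ Finset.range T, (Real.sqrt (a (k + 1)) - Real.sqrt (a k)) := by
          rw [Finset.mul_sum]
      _ = (2 / γ) * (Real.sqrt (a T) - Real.sqrt (a 0)) := by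
          rw [Finset.sum_range_sub (fun k => Real.sqrt (a k))]
      _ = (2 / γ) * Real.sqrt (a T) := by
          simp [ha, hv0]
  refine le_trans hsum ?_
  have hsT : 0 ≤ Real.sqrt (a T) := Real.sqrt_nonneg _
  have haT : a T = (T : ℝ) * v T i := rfl
  rw [haT] at hsT ⊢
  set s := Real.sqrt ((T : ℝ) * v T i)
  rw [div_mul_eq_mul_div, div_mul_eq_mul_div, div_le_div_iff₀ hγ0 hγ0]
  nlinarith [mul_nonneg hsT hγ0.le, mul_pos hδ hγ0, mul_nonneg (mul_nonneg hsT hγ0.le) hγ0.le]
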